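/- Let G be a finite abelian group and A, B nonempty subsets of G. If |A + B| = |A|, then for every m ≥ 1, |A + m(B − B)| = |A|, where m(B − B) denotes the m-fold sumset of B − B. -/
import Mathlib


open Pointwise

/-- The `m`-fold iterated sumset of a finite set (`foldSum S 0 = {0}`). -/
def foldSum {G : Type*} [AddCommGroup G] [DecidableEq G] (S : Finset G) : ℕ → Finset G
  | 0 => {0}
  | n + 1 => foldSum S n + S

theorem absorption_of_iterated_difference_sets {G : Type*} [AddCommGroup G] [Fintype G]
    [DecidableEq G] (A B : Finset G) (hA : A.Nonempty) (hB : B.Nonempty)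
    (h : (A + B).card = A.card) :
    ∀ m : ℕ, 1 ≤ m → (A + foldSum (B - B) m).card = A.card := by
  -- Step 1: for every b ∈ B, A + {b} = A + B
  have hsingle : ∀ b ∈ B, A + ({b} : Finset G) = A + B := by
    intro b hb
    apply Finset.eq_of_subset_of_card_le
    · exact Finset.add_subset_add_left (Finset.singleton_subset_iff.2 hb)
    · rw [h, Finset.add_singleton]
      simp [Finset.card_image_of_injective _ (add_left_injective b)]
  -- Step 2: A absorbs B - B
  have habs : ∀ a ∈ A, ∀ d ∈ B - B, a + d ∈ A := by
    intro a ha d hd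
    rw [Finset.mem_sub] at hd
    obtain ⟨b, hb, b', hb', rfl⟩ := hd
    have h1 : a + b ∈ A + ({b} : Finset G) := by
      rw [Finset.add_singleton]; exact Finset.mem_image_of_mem _ ha
    rw [hsingle b hb, ← hsingle b' hb', Finset.add_singleton] at h1
    obtain ⟨a', ha', heq⟩ := Finset.mem_image.1 h1
    have hq : a' + b' = a + b := heq
    have : a + (b - b') = a' := by rw [eq_sub_of_add_eq hq.symm]; abel
    rwa [this]
  have h0 : (0 : G) ∈ B - B := by
    obtain ⟨b, hb⟩ := hB
    rw [Finset.mem_sub]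
    exact ⟨b, hb, b, hb, sub_self b⟩
  have hBB : A + (B - B) = A := by
    apply Finset.Subset.antisymm
    · intro x hx
      rw [Finset.mem_add] at hx
      obtain ⟨a, ha, d, hd, rfl⟩ := hx
      exact habs a ha d hd
    · intro a ha
      rw [Finset.mem_add]
      exact ⟨a, ha, 0, h0, add_zero a⟩
  have hfold : ∀ m : ℕ, A + foldSum (B - B) m = A := by
    intro m
    induction m with
    | zero => show A + {0} = A; simp [Finset.add_singleton]
    | succ n ih =>
      show A + (foldSum (B - B) n + (B - B)) = A
      rw [← add_assoc, ih, hBB]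
  intro m _
  rw [hfold m]
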